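/- arXiv:0906.3061 — 4 statements merged into one kernel-verified Lean document; each statement's English description precedes it below -/
import Mathlib

section
/- Let C be a small category, J a Grothendieck topology on C, and D a full J-dense subcategory of C. Then a sieve S on an object c of C is J-covering if and only if for every morphism f : d ⟶ c in C with d an object of D, the sieve on d in D consisting of the morphisms g : e ⟶ d with e an object of D such that f ∘ g belongs to S is (J|_D)-covering. -/
open CategoryTheory

universe u

namespace Stmt0

variable {C : Type u} [SmallCategory C]

/-- The full subcategory of `C` on the objects in `D`. -/
abbrev Sub (D : Set C) := ObjectProperty.FullSubcategory (fun c => c ∈ D)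

/-- The inclusion functor of the full subcategory. -/
abbrev incl (D : Set C) : Sub D ⥤ C := ObjectProperty.ι _

/-- `D` is `J`-dense: every object of `C` admits a `J`-covering sieve generated by
morphisms whose domains lie in `D`. -/
def IsDenseSub (D : Set C) (J : GrothendieckTopology C) : Prop :=
  ∀ c : C, ∃ S ∈ J c, ∀ ⦃d : C⦄ (f : d ⟶ c), S f →
    ∃ e : C, e ∈ D ∧ ∃ (g : d ⟶ e) (h : e ⟶ c), S h ∧ g ≫ h = f

/-- The covering sieves of the induced "topology" `J|_D` on the full subcategory:
a sieve `T` on an object of `D` is covering iff the sieve of `C` it generates is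
`J`-covering. -/
def restrictCov (D : Set C) (J : GrothendieckTopology C) (d : Sub D) : Set (Sieve d) :=
  {T | Sieve.functorPushforward (incl D) T ∈ J d.obj}

/-- A sieve `S` on `c` is `J`-covering if and only if for every morphism `f : d ⟶ c` with
`d ∈ D`, the sieve `{g : e ⟶ d in D | g ≫ f ∈ S}` is `(J|_D)`-covering. -/
theorem statement0 (D : Set C) (J : GrothendieckTopology C) (hD : IsDenseSub D J)
    (c : C) (S : Sieve c) :
    S ∈ J c ↔ ∀ (d : C) (hd : d ∈ D) (f : d ⟶ c),
      Sieve.functorPullback (incl D) (S.pullback f) ∈ restrictCov D J ⟨d, hd⟩ := by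
  constructor
  · intro hS d hd f
    simp only [restrictCov, Set.mem_setOf_eq]
    apply J.transitive (J.pullback_stable f hS)
    intro x h hh
    obtain ⟨Sx, hSx, hfac⟩ := hD x
    apply J.superset_covering _ hSx
    intro y k hk
    obtain ⟨e, he, g, h', hSh', hgh⟩ := hfac k hk
    refine ⟨⟨e, he⟩, (ObjectProperty.homMk (h' ≫ h : e ⟶ d) : (⟨e, he⟩ : Sub D) ⟶ ⟨d, hd⟩), g, ?_, ?_⟩
    · show S ((h' ≫ h) ≫ f)
      rw [Category.assoc]
      exact S.downward_closed hh h'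
    · rw [← hgh]; simp [incl]
  · intro H
    obtain ⟨R, hR, hfac⟩ := hD c
    apply J.transitive hR
    intro x f' hf'
    obtain ⟨e, he, g, h, hRh, hgh⟩ := hfac f' hf'
    have hT := H e he h
    apply J.superset_covering _ (J.pullback_stable g hT)
    intro y k hk
    obtain ⟨Z, b, a, hb, heq⟩ := hk
    show S (k ≫ f')
    have hb' : S (b.hom ≫ h) := hb
    have : k ≫ f' = a ≫ (b.hom ≫ h) := by
      rw [← hgh, ← Category.assoc, heq, Category.assoc]; rfl
    rw [this]
    exact S.downward_closed hb' a

end Stmt0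
end

section
/- Let C be a small category, J a Grothendieck topology on C, D a full J-dense subcategory of C, and Z a Grothendieck topology on D containing J|_D. Then the assignment Z̄, sending each object c of C to the set of sieves S on c such that for every morphism f : d ⟶ c of C with d an object of D the sieve {g : e ⟶ d in D | f ∘ g ∈ S} is Z-covering, is a Grothendieck topology on C containing J, and its induced topology (Z̄)|_D on D equals Z. -/
open CategoryTheory

universe u

namespace Stmt1

variable {C : Type u} [SmallCategory C]

/-- The full subcategory of `C` on the objects in `D`. -/
abbrev Sub (D : Set C) := ObjectProperty.FullSubcategory (fun c => c ∈ D)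

/-- The inclusion functor of the full subcategory. -/
abbrev incl (D : Set C) : Sub D ⥤ C := ObjectProperty.ι _

/-- `D` is `J`-dense: every object of `C` admits a `J`-covering sieve generated by
morphisms whose domains lie in `D`. -/
def IsDenseSub (D : Set C) (J : GrothendieckTopology C) : Prop :=
  ∀ c : C, ∃ S ∈ J c, ∀ ⦃d : C⦄ (f : d ⟶ c), S f →
    ∃ e : C, e ∈ D ∧ ∃ (g : d ⟶ e) (h : e ⟶ c), S h ∧ g ≫ h = f

/-- The covering sieves of the induced "topology" `J|_D` on the full subcategory:
a sieve `T` on an object of `D` is covering iff the sieve of `C` it generates is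
`J`-covering. -/
def restrictCov (D : Set C) (J : GrothendieckTopology C) (d : Sub D) : Set (Sieve d) :=
  {T | Sieve.functorPushforward (incl D) T ∈ J d.obj}

/-- The assignment `Z̄`: a sieve `S` on `c` belongs to `Z̄(c)` iff for every `f : d ⟶ c`
with `d ∈ D`, the sieve `{g : e ⟶ d in D | g ≫ f ∈ S}` is `Z`-covering. -/
def barCov (D : Set C) (Z : GrothendieckTopology (Sub D)) (c : C) : Set (Sieve c) :=
  {S | ∀ (d : C) (hd : d ∈ D) (f : d ⟶ c),
    Sieve.functorPullback (incl D) (S.pullback f) ∈ Z ⟨d, hd⟩}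

/-- If `D` is `J`-dense and `Z` is a Grothendieck topology on `D` containing `J|_D`, then
`Z̄` is a Grothendieck topology on `C` containing `J`, whose induced topology on `D` is `Z`. -/
theorem statement1 (D : Set C) (J : GrothendieckTopology C) (hD : IsDenseSub D J)
    (Z : GrothendieckTopology (Sub D))
    (hZ : ∀ (d : Sub D) (T : Sieve d), T ∈ restrictCov D J d → T ∈ Z d) :
    ∃ K : GrothendieckTopology C,
      K.sieves = barCov D Z ∧ J ≤ K ∧
      (∀ d : Sub D, restrictCov D K d = Z.sieves d) := by
  -- build the topology
  refine ⟨⟨barCov D Z, ?_, ?_, ?_⟩, rfl, ?_, ?_⟩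
  · -- top
    intro c d hd f
    rw [Sieve.pullback_top, Sieve.functorPullback_top]
    exact Z.top_mem _
  · -- pullback stable
    intro c c' S h hS d hd f
    have : (S.pullback h).pullback f = S.pullback (f ≫ h) := by
      ext; simp
    rw [this]
    exact hS d hd (f ≫ h)
  · -- transitive
    intro c S hS R hR d hd f
    apply Z.transitive (hS d hd f)
    intro e g hg
    have hg' : S ((incl D).map g ≫ f) := hg
    have key := hR hg' e.obj e.2 (𝟙 e.obj)
    have heq : Sieve.functorPullback (incl D) ((R.pullback ((incl D).map g ≫ f)).pullback (𝟙 e.obj))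
        = (Sieve.functorPullback (incl D) (R.pullback f)).pullback g := by
      rw [Sieve.pullback_id]
      ext x k
      show R.arrows ((incl D).map k ≫ (incl D).map g ≫ f) ↔
        R.arrows ((incl D).map (k ≫ g) ≫ f)
      rw [Functor.map_comp, Category.assoc]
    rw [heq] at key
    exact key
  · -- J ≤ K
    intro c S hS d hd f
    apply hZ
    unfold restrictCov
    have hRf : S.pullback f ∈ J d := J.pullback_stable f hS
    apply J.transitive hRf
    intro e h hh
    obtain ⟨Se, hSe, hfac⟩ := hD e
    apply J.superset_covering _ hSe
    intro x k hk
    obtain ⟨e', he', g, h', hSh', hgh⟩ := hfac k hk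
    refine ⟨⟨e', he'⟩, (show (⟨e', he'⟩ : Sub D) ⟶ ⟨d, hd⟩ from ObjectProperty.homMk (h' ≫ h : e' ⟶ d)), g, ?_, ?_⟩
    · show S.arrows ((h' ≫ h) ≫ f)
      rw [Category.assoc]
      exact S.downward_closed hh h'
    · rw [← hgh]; simp [incl]
  · -- restriction equals Z
    intro d
    ext T
    constructor
    · intro hT
      have := hT d.obj d.2 (𝟙 d.obj)
      have heq : Sieve.functorPullback (incl D)
          ((Sieve.functorPushforward (incl D) T).pullback (𝟙 d.obj))
          = Sieve.functorPullback (incl D) (Sieve.functorPushforward (incl D) T) := by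
        simp
      rw [heq] at this
      have hff : Sieve.functorPullback (incl D) (Sieve.functorPushforward (incl D) T) = T :=
        (Sieve.fullyFaithfulFunctorGaloisCoinsertion (incl D) d).u_l_eq T
      rw [hff] at this
      exact this
    · intro hT d' hd' f
      apply Z.superset_covering _ (Z.pullback_stable (show (⟨d', hd'⟩ : Sub D) ⟶ d from ObjectProperty.homMk f) hT)
      intro e g hg
      show (Sieve.functorPushforward (incl D) T) ((incl D).map g ≫ f)
      have : (incl D).map g ≫ f = (incl D).map (g ≫ (show (⟨d', hd'⟩ : Sub D) ⟶ d from ObjectProperty.homMk f)) := rfl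
      rw [this]
      exact Sieve.image_mem_functorPushforward _ _ hg


end Stmt1
end

section
/- Let C be a small category and J a Grothendieck topology on C such that every J-covering sieve is stably nonempty. Then for every presheaf E : Cᵒᵖ ⥤ Type and every subpresheaf A of E, the subpresheaf N(A) of E is J-closed, i.e., N(A) equals its J-closure. -/
open CategoryTheory CategoryTheory.GrothendieckTopology Opposite

universe u

namespace Stmt7

variable {C : Type u} [SmallCategory C]

/-- A sieve is stably nonempty if all its pullbacks are nonempty. -/
def StablyNonempty {c : C} (S : Sieve c) : Prop :=
  ∀ ⦃d : C⦄ (f : d ⟶ c), S.pullback f ≠ ⊥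

/-- The subpresheaf `N(A)` of `E`, whose sections at `c` are the sections `e ∈ E(c)` such
that no restriction of `e` along any morphism lies in `A`. -/
def negSub (E : Cᵒᵖ ⥤ Type u) (A : Subfunctor E) : Subfunctor E where
  obj c := {e | ∀ (d : C) (f : d ⟶ unop c), E.map f.op e ∉ A.obj (op d)}
  map := by
    intro U V i e he d f hf
    apply he d (f ≫ i.unop)
    have : (f ≫ i.unop).op = i ≫ f.op := rfl
    rw [this, FunctorToTypes.map_comp_apply] at *
    exact hf

/-- If every `J`-covering sieve is stably nonempty, then for every presheaf `E` and every
subpresheaf `A` of `E`, the subpresheaf `N(A)` is `J`-closed, i.e. it equals its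
`J`-closure (which is `Subpresheaf.sheafify J (negSub E A)` in Mathlib's terminology). -/
theorem statement7 (J : GrothendieckTopology C)
    (hJ : ∀ (c : C) (S : Sieve c), S ∈ J c → StablyNonempty S)
    (E : Cᵒᵖ ⥤ Type u) (A : Subfunctor E) :
    Subfunctor.sheafify J (negSub E A) = negSub E A := by
  refine le_antisymm ?_ (Subfunctor.le_sheafify J _)
  intro U e (he : (negSub E A).sieveOfSection e ∈ J (unop U))
  intro d f hf
  -- pullback of covering sieve along f is nonempty
  have hne := hJ _ _ he f
  have : ∃ (d' : C) (g : d' ⟶ d), ((negSub E A).sieveOfSection e).pullback f g := by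
    by_contra h
    push_neg at h
    apply hne
    ext d' g
    constructor
    · intro hg; exact absurd hg (h d' g)
    · intro hg; exact hg.elim
  obtain ⟨d', g, hg⟩ := this
  have hmem : E.map (g ≫ f).op e ∈ (negSub E A).obj (op d') := hg
  apply hmem d' (𝟙 d')
  have : E.map (𝟙 d').op (E.map (g ≫ f).op e) = E.map g.op (E.map f.op e) := by
    rw [← FunctorToTypes.map_comp_apply, ← FunctorToTypes.map_comp_apply, ← op_comp]
    simp
  rw [this]
  exact A.map g.op hf

end Stmt7
end

section
/- Let C be a small category and J a Grothendieck topology on C. Then the following are equivalent: (i) every stably nonempty sieve on every object of C is J-covering; (ii) for every object c of C and every sieve R on c, the sieve R ⊔ ¬R is J-covering. -/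
open CategoryTheory

universe u

namespace Stmt8

variable {C : Type u} [SmallCategory C]

/-- A sieve is stably nonempty if all its pullbacks are nonempty. -/
def StablyNonempty {c : C} (S : Sieve c) : Prop :=
  ∀ ⦃d : C⦄ (f : d ⟶ c), S.pullback f ≠ ⊥

/-- The pseudocomplement `¬R` of a sieve `R` on `c`: the sieve of morphisms `f` with
codomain `c` whose pullback sieve `f*(R)` is empty. -/
def negSieve {c : C} (R : Sieve c) : Sieve c where
  arrows := fun _ f => R.pullback f = ⊥
  downward_closed := by
    intro d e f hf g
    rw [Sieve.pullback_comp, hf]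
    exact le_antisymm (fun Y h hh => hh) bot_le

lemma sieve_eq_bot_iff {c : C} (S : Sieve c) :
    S = ⊥ ↔ ∀ ⦃d : C⦄ (f : d ⟶ c), ¬ S f := by
  constructor
  · rintro rfl d f hf; exact hf
  · intro h
    apply le_antisymm
    · intro d f hf; exact absurd hf (h f)
    · exact bot_le

/-- Every stably nonempty sieve is `J`-covering if and only if `R ⊔ ¬R` is `J`-covering
for every sieve `R`. -/
theorem statement8 (J : GrothendieckTopology C) :
    (∀ (c : C) (S : Sieve c), StablyNonempty S → S ∈ J c) ↔
    (∀ (c : C) (R : Sieve c), R ⊔ negSieve R ∈ J c) := by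
  constructor
  · intro h c R
    apply h
    intro d f hbot
    by_cases hR : R.pullback f = ⊥
    · have : (R ⊔ negSieve R).pullback f (𝟙 d) := by
        refine Or.inr ?_
        show R.pullback (𝟙 d ≫ f) = ⊥
        rwa [Category.id_comp]
      rw [hbot] at this
      exact this
    · rw [sieve_eq_bot_iff] at hR
      push_neg at hR
      obtain ⟨e, g, hg⟩ := hR
      have : (R ⊔ negSieve R).pullback f g := Or.inl hg
      rw [hbot] at this
      exact this
  · intro h c S hS
    have hneg : negSieve S = ⊥ := by
      rw [sieve_eq_bot_iff]
      intro d f hf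
      exact hS f hf
    have := h c S
    rw [hneg, sup_bot_eq] at this
    exact this

end Stmt8
end
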